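/- Under the ε-TS algorithm, assume μ_1 > 1−ε, fix b ∈ (0,1), and let L_1 = L_1(μ_1, ε, b) be a natural number such that for all t ≥ L_1 it holds that (t−1)^b ≥ 2 ln t / d(1−ε, μ_1) + 1. Then for every horizon T: Σ_{t=1}^T P(θ_1(t) ≤ 1−ε and N_1(t) > (t−1)^b) ≤ L_1 + (π²/6) / d(1−ε, μ_1). -/

import Mathlib

open MeasureTheory ProbabilityTheory Filter Real
open scoped ENNReal

noncomputable section

/-- KL divergence between Bernoulli distributions of means `p` and `q` (real-valued version). -/
def klBern (p q : ℝ) : ℝ :=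
  p * Real.log (p / q) + (1 - p) * Real.log ((1 - p) / (1 - q))

/-- KL divergence between Bernoulli distributions of means `p` and `q`, with the conventions
`d(p,q) = ∞` if `p < 1` and `q ≥ 1`, or if `p > 0` and `q = 0`. -/
def klBernE (p q : ℝ) : ℝ≥0∞ :=
  if (p < 1 ∧ 1 ≤ q) ∨ (0 < p ∧ q = 0) then ⊤ else ENNReal.ofReal (klBern p q)

/-- The Bernoulli law with mean `p`, as a measure on `ℝ`. -/
def bernoulliLaw (p : ℝ) : Measure ℝ :=
  ENNReal.ofReal p • Measure.dirac (1 : ℝ) + ENNReal.ofReal (1 - p) • Measure.dirac (0 : ℝ)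

/-- The uniform law on `[0,1]`, as a measure on `ℝ`. -/
def uniform01 : Measure ℝ := volume.restrict (Set.Icc (0 : ℝ) 1)

/-- The cumulative distribution function of the `Beta(a, b)` distribution (for positive integer
parameters), evaluated at `x`. -/
def betaCDF (a b : ℕ) (x : ℝ) : ℝ :=
  (∫ y in (0 : ℝ)..x, y ^ (a - 1) * (1 - y) ^ (b - 1)) /
    (∫ y in (0 : ℝ)..1, y ^ (a - 1) * (1 - y) ^ (b - 1))

/-- The generalized inverse cdf of the `Beta(a, b)` distribution: applied to a uniform random
variable on `[0,1]`, it produces a `Beta(a, b)`-distributed random variable. -/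
def betaInvCDF (a b : ℕ) (u : ℝ) : ℝ :=
  sInf {x : ℝ | x ∈ Set.Icc (0 : ℝ) 1 ∧ u ≤ betaCDF a b x}

variable {K : ℕ} {Ω : Type*}

/-- `pulls arm a t ω` is the number of rounds `τ ∈ {1, …, t-1}` in which arm `a` was played,
i.e. `N_a(t)`, the number of pulls of arm `a` before round `t`. -/
def pulls (arm : ℕ → Ω → Fin K) (a : Fin K) (t : ℕ) (ω : Ω) : ℕ :=
  ∑ τ ∈ Finset.Ico 1 t, if arm τ ω = a then 1 else 0

/-- `rewSum arm X a t ω` is `S_a(t)`, the sum of the rewards observed from arm `a` before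
round `t`, where `X a k` is the reward obtained on the `k`-th pull of arm `a`. -/
def rewSum (arm : ℕ → Ω → Fin K) (X : Fin K → ℕ → Ω → ℝ) (a : Fin K) (t : ℕ) (ω : Ω) : ℝ :=
  ∑ k ∈ Finset.Icc 1 (pulls arm a t ω), X a k ω

/-- `empMean arm X a t ω` is `μ̂_a(t) = S_a(t) / N_a(t)` (and `0` if `N_a(t) = 0`). -/
def empMean (arm : ℕ → Ω → Fin K) (X : Fin K → ℕ → Ω → ℝ) (a : Fin K) (t : ℕ) (ω : Ω) : ℝ :=
  if pulls arm a t ω = 0 then 0 else rewSum arm X a t ω / (pulls arm a t ω : ℝ)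

/-- The first Beta-posterior parameter of `ε`-TS: `α_a(t) = ⌊S_a(t)/(1-ε)⌋ + 1`. -/
def alphaTS (ε : ℝ) (arm : ℕ → Ω → Fin K) (X : Fin K → ℕ → Ω → ℝ) (a : Fin K) (t : ℕ)
    (ω : Ω) : ℕ :=
  ⌊rewSum arm X a t ω / (1 - ε)⌋₊ + 1

/-- The second Beta-posterior parameter of `ε`-TS: `β_a(t) = N_a(t) + 2 - α_a(t)`. -/
def betaTS (ε : ℝ) (arm : ℕ → Ω → Fin K) (X : Fin K → ℕ → Ω → ℝ) (a : Fin K) (t : ℕ)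
    (ω : Ω) : ℕ :=
  pulls arm a t ω + 2 - alphaTS ε arm X a t ω

/-- The posterior sample `θ_a(t)` used by `ε`-TS: if `μ̂_a(t) > 1 - ε` then `θ_a(t) = μ̂_a(t)`;
otherwise `θ_a(t) = (1-ε)·Y` where `Y ~ Beta(α_a(t), β_a(t))` is obtained by applying the
inverse Beta cdf to the fresh independent uniform random variable `U a t`. -/
def thetaTS (ε : ℝ) (arm : ℕ → Ω → Fin K) (X : Fin K → ℕ → Ω → ℝ)
    (U : Fin K → ℕ → Ω → ℝ) (a : Fin K) (t : ℕ) (ω : Ω) : ℝ :=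
  if 1 - ε < empMean arm X a t ω then empMean arm X a t ω
  else (1 - ε) * betaInvCDF (alphaTS ε arm X a t ω) (betaTS ε arm X a t ω) (U a t ω)

/-- An execution of the `ε`-TS algorithm on a `K`-armed Bernoulli bandit with mean vector `μ`:
`X a k` is the (i.i.d. `Bernoulli(μ a)`) reward of the `k`-th pull of arm `a`, `U a t` are
i.i.d. uniform random variables on `[0,1]` (independent of the rewards) providing the
posterior samples via the inverse-cdf construction, and at every round `t ≥ 1` the played arm
`arm t` maximizes the posterior samples `θ_·(t)`. -/
structure EpsTS (K : ℕ) (μ : Fin K → ℝ) (ε : ℝ) (Ω : Type*) [MeasurableSpace Ω] where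
  P : Measure Ω
  isProb : IsProbabilityMeasure P
  X : Fin K → ℕ → Ω → ℝ
  U : Fin K → ℕ → Ω → ℝ
  arm : ℕ → Ω → Fin K
  hXmeas : ∀ a n, Measurable (X a n)
  hUmeas : ∀ a t, Measurable (U a t)
  hArmMeas : ∀ t, Measurable (arm t)
  hXlaw : ∀ a n, P.map (X a n) = bernoulliLaw (μ a)
  hUlaw : ∀ a t, P.map (U a t) = uniform01
  hIndep : iIndepFun (m := fun _ : (Fin K × ℕ) ⊕ (Fin K × ℕ) => (inferInstance : MeasurableSpace ℝ))
    (Sum.elim (fun p : Fin K × ℕ => X p.1 p.2) (fun p : Fin K × ℕ => U p.1 p.2)) P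
  hArgmax : ∀ t, 1 ≤ t → ∀ ω b, thetaTS ε arm X U b t ω ≤ thetaTS ε arm X U (arm t ω) t ω

/-- `f` is an `ε`-gap function: `f : [0,1] → [0,∞)` with `f(Δ) = 0` for `Δ ∈ [0,ε]` and
`f(Δ) > 0` for `Δ > ε`. -/
def IsEpsGap (ε : ℝ) (f : ℝ → ℝ) : Prop :=
  (∀ Δ, 0 ≤ Δ → Δ ≤ 1 → 0 ≤ f Δ) ∧ (∀ Δ, 0 ≤ Δ → Δ ≤ ε → f Δ = 0) ∧
    ∀ Δ, ε < Δ → Δ ≤ 1 → 0 < f Δ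

/-- The lenient regret `R_f(T) = E[Σ_{t=1}^T f(Δ_{a_t})]` of an `ε`-TS execution, where
`Δ_a = μ* − μ_a` and `μ* = max_a μ_a`. -/
def lenientRegret {K : ℕ} {μ : Fin K → ℝ} {ε : ℝ} {Ω : Type*} [MeasurableSpace Ω]
    (E : EpsTS K μ ε Ω) (f : ℝ → ℝ) (T : ℕ) : ℝ :=
  ∫ ω, (∑ t ∈ Finset.Icc 1 T, f ((⨆ b, μ b) - μ (E.arm t ω))) ∂E.P

lemma klBern_aux_pos {q p : ℝ} (hq0 : 0 < q) (hq1 : q < 1) (hp0 : 0 < p) (hp1 : p < 1)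
    (hne : q ≠ p) : 0 < q * Real.log (q / p) + (1 - q) * Real.log ((1 - q) / (1 - p)) := by
  have hq1' : (0:ℝ) < 1 - q := by linarith
  have hp1' : (0:ℝ) < 1 - p := by linarith
  have hA : (0:ℝ) < p / q := by positivity
  have hA1 : p / q ≠ 1 := by
    intro h
    apply hne
    field_simp at h
    linarith
  have h1 : Real.log (p / q) < p / q - 1 := Real.log_lt_sub_one_of_pos hA hA1
  have h2 : Real.log ((1 - p) / (1 - q)) ≤ (1 - p) / (1 - q) - 1 :=
    Real.log_le_sub_one_of_pos (by positivity)
  have e1 : Real.log (q / p) = - Real.log (p / q) := by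
    rw [← Real.log_inv]; congr 1; field_simp
  have e2 : Real.log ((1 - q) / (1 - p)) = - Real.log ((1 - p) / (1 - q)) := by
    rw [← Real.log_inv]; congr 1; field_simp
  have k1 : q * Real.log (p / q) < q * (p / q - 1) := by
    exact mul_lt_mul_of_pos_left h1 hq0
  have k2 : (1 - q) * Real.log ((1 - p) / (1 - q)) ≤ (1 - q) * ((1 - p) / (1 - q) - 1) :=
    mul_le_mul_of_nonneg_left h2 hq1'.le
  have c1 : q * (p / q - 1) = p - q := by field_simp
  have c2 : (1 - q) * ((1 - p) / (1 - q) - 1) = q - p := by field_simp; ring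
  rw [e1, e2]
  nlinarith [k1, k2]


lemma iIndepFun_reindex {ι κ Ω : Type*} [MeasurableSpace Ω] {P : Measure Ω} {f : ι → Ω → ℝ}
    (h : iIndepFun (m := fun _ => (inferInstance : MeasurableSpace ℝ)) f P)
    (g : κ → ι) (hg : Function.Injective g) :
    iIndepFun (m := fun _ => (inferInstance : MeasurableSpace ℝ)) (fun k => f (g k)) P := by
  classical
  rw [iIndepFun_iff_measure_inter_preimage_eq_mul] at h ⊢
  intro S sets hsets
  set e : κ ↪ ι := ⟨g, hg⟩ with he
  set sets' : ι → Set ℝ := fun i => ⋂ k ∈ S.filter (fun k => g k = i), sets k with hs'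
  have hmeas' : ∀ i ∈ S.map e, MeasurableSet (sets' i) := by
    intro i _
    exact MeasurableSet.biInter (Finset.countable_toSet _)
      (fun k hk => hsets k (Finset.mem_of_mem_filter k hk))
  have hkey : ∀ k ∈ S, sets' (g k) = sets k := by
    intro k hk
    have : S.filter (fun k' => g k' = g k) = {k} := by
      ext k'
      simp [Finset.mem_filter, hg.eq_iff]
      intro h'; subst h'; exact hk
    rw [hs']; simp only [this]; simp
  have h2 := h (S.map e) hmeas'
  have hinter : (⋂ i ∈ S.map e, f i ⁻¹' sets' i) = ⋂ k ∈ S, (fun ω => f (g k) ω) ⁻¹' sets k := by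
    ext ω
    simp only [Set.mem_iInter, Finset.mem_map, he]
    constructor
    · intro hω k hk
      have := hω (g k) ⟨k, hk, rfl⟩
      rwa [hkey k hk] at this
    · rintro hω i ⟨k, hk, rfl⟩
      simp only [Function.Embedding.coeFn_mk]
      rw [hkey k hk]
      exact hω k hk
  have hprod : ∏ i ∈ S.map e, P (f i ⁻¹' sets' i) = ∏ k ∈ S, P ((fun ω => f (g k) ω) ⁻¹' sets k) := by
    rw [Finset.prod_map]
    exact Finset.prod_congr rfl fun k hk => by rw [he]; simp only [Function.Embedding.coeFn_mk]; rw [hkey k hk]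
  rw [hinter, hprod] at h2
  exact h2


lemma ae_eq_dirac_smul (f : ℝ → ℝ) (c : ℝ≥0∞) (x : ℝ) :
    f =ᵐ[c • Measure.dirac x] (fun _ => f x) := by
  rw [Filter.EventuallyEq, ae_iff]
  refine measure_mono_null (t := ({x}ᶜ : Set ℝ)) (fun y hy => ?_) ?_
  · simp only [Set.mem_compl_iff, Set.mem_singleton_iff]
    intro h
    exact hy (by rw [h])
  · rw [Measure.smul_apply, Measure.dirac_apply' _ (MeasurableSet.singleton x).compl]
    simp

lemma integrable_smul_dirac (f : ℝ → ℝ) (c : ℝ≥0∞) (hc : c ≠ ⊤) (x : ℝ) :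
    Integrable f (c • Measure.dirac x) := by
  haveI : IsFiniteMeasure (c • Measure.dirac x) := by
    constructor
    rw [Measure.smul_apply, Measure.dirac_apply' _ MeasurableSet.univ]
    simpa using hc.lt_top
  exact (integrable_const (f x)).congr (ae_eq_dirac_smul f c x).symm

lemma integral_smul_dirac (f : ℝ → ℝ) (c : ℝ≥0∞) (x : ℝ) :
    ∫ y, f y ∂(c • Measure.dirac x) = c.toReal * f x := by
  rw [integral_smul_measure, integral_dirac, smul_eq_mul]

lemma integral_bernoulliLaw (p : ℝ) (hp0 : 0 ≤ p) (hp1 : p ≤ 1) (f : ℝ → ℝ) :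
    ∫ x, f x ∂(bernoulliLaw p) = p * f 1 + (1 - p) * f 0 := by
  rw [bernoulliLaw, integral_add_measure (integrable_smul_dirac f _ ENNReal.ofReal_ne_top 1)
    (integrable_smul_dirac f _ ENNReal.ofReal_ne_top 0),
    integral_smul_dirac, integral_smul_dirac, ENNReal.toReal_ofReal hp0,
    ENNReal.toReal_ofReal (by linarith)]


lemma bernoulli_ae_mem {Ω : Type*} [MeasurableSpace Ω] {P : Measure Ω} {Y : Ω → ℝ} {p : ℝ}
    (hY : Measurable Y) (hlaw : P.map Y = bernoulliLaw p) :
    ∀ᵐ ω ∂P, Y ω ∈ ({0, 1} : Set ℝ) := by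
  rw [ae_iff]
  have hms : MeasurableSet (({0, 1} : Set ℝ)ᶜ) := (by measurability : MeasurableSet ({0,1}:Set ℝ)).compl
  have : {ω | ¬ Y ω ∈ ({0,1} : Set ℝ)} = Y ⁻¹' ({0,1} : Set ℝ)ᶜ := rfl
  rw [this, ← Measure.map_apply hY hms, hlaw]
  rw [bernoulliLaw, Measure.add_apply, Measure.smul_apply, Measure.smul_apply,
    Measure.dirac_apply' _ hms, Measure.dirac_apply' _ hms]
  simp

lemma bernoulli_ae_eq_one {Ω : Type*} [MeasurableSpace Ω] {P : Measure Ω} {Y : Ω → ℝ}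
    (hY : Measurable Y) (hlaw : P.map Y = bernoulliLaw 1) :
    ∀ᵐ ω ∂P, Y ω = 1 := by
  rw [ae_iff]
  have hms : MeasurableSet (({1} : Set ℝ)ᶜ) := (MeasurableSet.singleton (1:ℝ)).compl
  have : {ω | ¬ Y ω = 1} = Y ⁻¹' ({1} : Set ℝ)ᶜ := rfl
  rw [this, ← Measure.map_apply hY hms, hlaw]
  rw [bernoulliLaw, Measure.add_apply, Measure.smul_apply, Measure.smul_apply,
    Measure.dirac_apply' _ hms, Measure.dirac_apply' _ hms]
  simp


lemma chernoff_bernoulli {Ω : Type*} [MeasurableSpace Ω] (P : Measure Ω)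
    [IsProbabilityMeasure P] (Y : ℕ → Ω → ℝ) (hmeas : ∀ k, Measurable (Y k))
    {p : ℝ} (hlaw : ∀ k, P.map (Y k) = bernoulliLaw p)
    (hindep : iIndepFun (m := fun _ => (inferInstance : MeasurableSpace ℝ)) Y P)
    {q : ℝ} (hq0 : 0 < q) (hq1 : q < 1) (hqp : q < p) (hp1 : p < 1) (n : ℕ) :
    P {ω | ∑ k ∈ Finset.Icc 1 n, Y k ω ≤ q * n} ≤
      ENNReal.ofReal (Real.exp (-(n * klBern q p))) := by
  have hp0 : 0 < p := hq0.trans hqp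
  have h1p : (0:ℝ) < 1 - p := by linarith
  have h1q : (0:ℝ) < 1 - q := by linarith
  set R : ℝ := p * (1 - q) / (q * (1 - p)) with hR
  have hR0 : 0 < R := by positivity
  have hR1 : 1 < R := by
    rw [hR, lt_div_iff₀ (by positivity)]
    nlinarith
  set t : ℝ := -Real.log R with htdef
  have ht : t ≤ 0 := by
    rw [htdef, neg_nonpos]
    exact Real.log_nonneg hR1.le
  -- a.e. nonnegativity of the sum
  have hae : ∀ᵐ ω ∂P, ∀ k : ℕ, Y k ω ∈ ({0,1} : Set ℝ) := by
    rw [ae_all_iff]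
    exact fun k => bernoulli_ae_mem (hmeas k) (hlaw k)
  have hsum_meas : Measurable (fun ω => ∑ k ∈ Finset.Icc 1 n, Y k ω) :=
    Finset.measurable_sum _ (fun k _ => hmeas k)
  have hsumfun : (∑ k ∈ Finset.Icc 1 n, Y k) = fun ω => ∑ k ∈ Finset.Icc 1 n, Y k ω := by
    ext ω; simp
  have hint : Integrable (fun ω => Real.exp (t * (∑ k ∈ Finset.Icc 1 n, Y k) ω)) P := by
    rw [hsumfun]
    refine Integrable.mono' (integrable_const 1)
      ((hsum_meas.const_mul t).exp.aestronglyMeasurable) ?_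
    filter_upwards [hae] with ω hω
    have hsum0 : 0 ≤ ∑ k ∈ Finset.Icc 1 n, Y k ω := by
      refine Finset.sum_nonneg fun k hk => ?_
      rcases hω k with h | h
      · simp [h]
      · rw [Set.mem_singleton_iff] at h; simp [h]
    rw [Real.norm_eq_abs, abs_of_pos (Real.exp_pos _)]
    calc Real.exp (t * ∑ k ∈ Finset.Icc 1 n, Y k ω) ≤ Real.exp 0 :=
      Real.exp_le_exp.mpr (mul_nonpos_of_nonpos_of_nonneg ht hsum0)
    _ = 1 := Real.exp_zero
  have hcher := measure_le_le_exp_mul_mgf (μ := P) (X := ∑ k ∈ Finset.Icc 1 n, Y k)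
    (q * n) ht hint
  -- compute the mgf
  have hmgf1 : ∀ k, mgf (Y k) P t = p * Real.exp t + (1 - p) := by
    intro k
    rw [mgf]
    have hfm : Measurable (fun x : ℝ => Real.exp (t * x)) := (measurable_id.const_mul t).exp
    have : ∫ ω, Real.exp (t * Y k ω) ∂P = ∫ x, Real.exp (t * x) ∂(P.map (Y k)) :=
      (integral_map (hmeas k).aemeasurable hfm.aestronglyMeasurable).symm
    rw [this, hlaw k, integral_bernoulliLaw p hp0.le hp1.le]
    simp
  have hmgf : mgf (∑ k ∈ Finset.Icc 1 n, Y k) P t = (p * Real.exp t + (1 - p)) ^ n := by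
    rw [hindep.mgf_sum hmeas (Finset.Icc 1 n)]
    rw [Finset.prod_congr rfl (fun k _ => hmgf1 k), Finset.prod_const, Nat.card_Icc]
    simp
  set A : ℝ := p * Real.exp t + (1 - p) with hAdef
  have hexpt : Real.exp t = R⁻¹ := by
    rw [htdef, Real.exp_neg, Real.exp_log hR0]
  have hA : A = (1 - p) / (1 - q) := by
    rw [hAdef, hexpt, hR]
    field_simp
    ring
  have hA0 : 0 < A := by rw [hA]; positivity
  -- the exponent identity
  have hlogR : Real.log R = Real.log p + Real.log (1 - q) - (Real.log q + Real.log (1 - p)) := by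
    rw [hR, Real.log_div (by positivity) (by positivity), Real.log_mul hp0.ne' h1q.ne',
      Real.log_mul hq0.ne' h1p.ne']
  have hlogA : Real.log A = Real.log (1 - p) - Real.log (1 - q) := by
    rw [hA, Real.log_div h1p.ne' h1q.ne']
  have hkl : klBern q p = q * (Real.log q - Real.log p) +
      (1 - q) * (Real.log (1 - q) - Real.log (1 - p)) := by
    rw [klBern, Real.log_div hq0.ne' hp0.ne', Real.log_div h1q.ne' h1p.ne']
  have hkey : Real.exp (-t * (q * n)) * A ^ n = Real.exp (-(n * klBern q p)) := by
    have : A ^ n = Real.exp (n * Real.log A) := by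
      rw [Real.exp_nat_mul, Real.exp_log hA0]
    rw [this, ← Real.exp_add]
    congr 1
    rw [htdef, hlogA, hkl, hlogR]
    ring
  rw [hmgf, hkey] at hcher
  calc P {ω | ∑ k ∈ Finset.Icc 1 n, Y k ω ≤ q * n}
      = ENNReal.ofReal (P {ω | (∑ k ∈ Finset.Icc 1 n, Y k) ω ≤ q * n}).toReal := by
        rw [ENNReal.ofReal_toReal (measure_ne_top _ _)]
        congr 1
        ext ω
        simp [Finset.sum_apply]
    _ ≤ ENNReal.ofReal (Real.exp (-(n * klBern q p))) := ENNReal.ofReal_le_ofReal hcher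


lemma sum_exp_tail (d : ℝ) (hd : 0 < d) (t : ℕ) (ht : 1 ≤ t) (u : ℝ) (hu0 : 0 ≤ u)
    (hu : 2 * Real.log t / d + 1 ≤ u) :
    ∑ n ∈ Finset.Ioc ⌊u⌋₊ (t - 1), Real.exp (-((n : ℝ) * d)) ≤ 1 / (t : ℝ) ^ 2 / d := by
  set m := ⌊u⌋₊ with hm
  set r : ℝ := Real.exp (-d) with hrdef
  have hr0 : 0 < r := Real.exp_pos _
  have hr1 : r < 1 := by
    rw [hrdef, Real.exp_lt_one_iff]; linarith
  have h1r : 0 < 1 - r := by linarith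
  have hterm : ∀ n : ℕ, Real.exp (-((n : ℝ) * d)) = r ^ n := by
    intro n
    rw [hrdef, ← Real.exp_nat_mul]
    congr 1; ring
  have hsub : Finset.Ioc m (t - 1) ⊆ Finset.Ico (m + 1) t := by
    intro n hn
    rw [Finset.mem_Ioc] at hn
    rw [Finset.mem_Ico]
    exact ⟨hn.1, lt_of_le_of_lt hn.2 (Nat.sub_lt (by omega) one_pos)⟩
  have hud : 2 * Real.log t + d ≤ u * d := by
    have hc : 2 * Real.log t / d * d = 2 * Real.log t := div_mul_cancel₀ _ hd.ne'
    nlinarith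
  calc ∑ n ∈ Finset.Ioc m (t - 1), Real.exp (-((n : ℝ) * d))
      = ∑ n ∈ Finset.Ioc m (t - 1), r ^ n := Finset.sum_congr rfl fun n _ => hterm n
    _ ≤ ∑ n ∈ Finset.Ico (m + 1) t, r ^ n :=
        Finset.sum_le_sum_of_subset_of_nonneg hsub (fun n _ _ => by positivity)
    _ = ∑ j ∈ Finset.range (t - (m + 1)), r ^ (m + 1 + j) :=
        Finset.sum_Ico_eq_sum_range (fun k => r ^ k) (m + 1) t
    _ = r ^ (m + 1) * ∑ j ∈ Finset.range (t - (m + 1)), r ^ j := by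
        rw [Finset.mul_sum]
        exact Finset.sum_congr rfl fun j _ => pow_add r (m + 1) j
    _ ≤ r ^ (m + 1) * (1 - r)⁻¹ := by
        refine mul_le_mul_of_nonneg_left ?_ (by positivity)
        refine Summable.sum_le_tsum _ (fun j _ => by positivity) ?_ |>.trans_eq
          (tsum_geometric_of_lt_one hr0.le hr1)
        exact summable_geometric_of_lt_one hr0.le hr1
    _ ≤ Real.exp (-(u * d)) * (Real.exp d / d) := by
        have h1 : r ^ (m + 1) ≤ Real.exp (-(u * d)) := by
          rw [← hterm (m + 1)]
          apply Real.exp_le_exp.mpr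
          have : u ≤ ((m + 1 : ℕ) : ℝ) := by
            push_cast
            exact (Nat.lt_floor_add_one u).le
          nlinarith
        have h2 : (1 - r)⁻¹ ≤ Real.exp d / d := by
          have hdr : d * r ≤ 1 - r := by
            have := Real.add_one_le_exp d
            have hrr : r * Real.exp d = 1 := by
              rw [hrdef, ← Real.exp_add]; simp
            nlinarith
          have hrinv : r⁻¹ = Real.exp d := by
            rw [hrdef, Real.exp_neg, inv_inv]
          calc (1 - r)⁻¹ ≤ (d * r)⁻¹ := inv_anti₀ (by positivity) hdr
            _ = Real.exp d / d := by rw [mul_inv, ← hrinv]; ring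
        exact mul_le_mul h1 h2 (by positivity) (Real.exp_pos _).le
    _ ≤ 1 / (t : ℝ) ^ 2 / d := by
        have ht0 : (0:ℝ) < t := by exact_mod_cast ht
        have h3 : Real.exp (-(u * d)) * Real.exp d ≤ 1 / (t : ℝ) ^ 2 := by
          rw [← Real.exp_add]
          have h4 : -(u * d) + d ≤ -(2 * Real.log t) := by linarith
          calc Real.exp (-(u * d) + d) ≤ Real.exp (-(2 * Real.log t)) :=
                Real.exp_le_exp.mpr h4
            _ = 1 / (t : ℝ) ^ 2 := by
                rw [Real.exp_neg, show (2:ℝ) * Real.log t = ((2:ℕ):ℝ) * Real.log t by norm_num,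
                  Real.exp_nat_mul, Real.exp_log ht0, one_div]
        calc Real.exp (-(u * d)) * (Real.exp d / d)
            = Real.exp (-(u * d)) * Real.exp d / d := by ring
          _ ≤ 1 / (t : ℝ) ^ 2 / d := by gcongr

/-- **Lemma (the optimal posterior sample is rarely small, case `μ_1 > 1 − ε`).** Assume
`μ_1 > 1 − ε` and let `b ∈ (0,1)`. If `L_1` is such that `(t−1)^b ≥ 2 ln t / d(1−ε, μ_1) + 1`
for all `t ≥ L_1`, then for every horizon `T`,
`Σ_{t=1}^T P(θ_1(t) ≤ 1−ε ∧ N_1(t) > (t−1)^b) ≤ L_1 + (π²/6)/d(1−ε, μ_1)`. -/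
theorem epsTS_sum_prob_theta_low_high_opt {K : ℕ} [NeZero K] (hK : 2 ≤ K)
    (ε : ℝ) (hε : ε ∈ Set.Ioo (0 : ℝ) 1)
    (μ : Fin K → ℝ) (hμ : ∀ a, μ a ∈ Set.Icc (0 : ℝ) 1)
    (hSorted : ∀ a b : Fin K, a ≤ b → μ b ≤ μ a)
    (hGap : ∀ a : Fin K, a ≠ 0 → ε < μ 0 - μ a)
    (hopt : 1 - ε < μ 0)
    (b : ℝ) (hb : b ∈ Set.Ioo (0 : ℝ) 1)
    (L1 : ℕ) (hL1 : ∀ t : ℕ, L1 ≤ t →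
      2 * Real.log t / klBern (1 - ε) (μ 0) + 1 ≤ ((t : ℝ) - 1) ^ b)
    {Ω : Type*} [MeasurableSpace Ω] (E : EpsTS K μ ε Ω) (T : ℕ) :
    ∑ t ∈ Finset.Icc 1 T,
        E.P {ω | thetaTS ε E.arm E.X E.U 0 t ω ≤ 1 - ε ∧
          ((t : ℝ) - 1) ^ b < (pulls E.arm 0 t ω : ℝ)}
      ≤ (L1 : ℝ≥0∞) + ENNReal.ofReal (Real.pi ^ 2 / 6) / klBernE (1 - ε) (μ 0) := by
  classical
  haveI : IsProbabilityMeasure E.P := E.isProb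
  set p : ℝ := μ 0 with hpdef
  set q : ℝ := 1 - ε with hqdef
  have hq0 : 0 < q := by rw [hqdef]; linarith [hε.2]
  have hq1 : q < 1 := by rw [hqdef]; linarith [hε.1]
  have hqp : q < p := hopt
  have hp1 : p ≤ 1 := (hμ 0).2
  -- the optimal arm's reward sequence
  set Y : ℕ → Ω → ℝ := fun k => E.X 0 k with hYdef
  have hYmeas : ∀ k, Measurable (Y k) := fun k => E.hXmeas 0 k
  have hYlaw : ∀ k, E.P.map (Y k) = bernoulliLaw p := fun k => E.hXlaw 0 k
  have hYindep : iIndepFun (m := fun _ => (inferInstance : MeasurableSpace ℝ)) Y E.P := by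
    have hinj : Function.Injective
        (fun k : ℕ => (Sum.inl ((0 : Fin K), k) : (Fin K × ℕ) ⊕ (Fin K × ℕ))) := by
      intro a c h
      simpa using h
    exact iIndepFun_reindex E.hIndep _ hinj
  -- the per-n bad events
  set A : ℕ → Set Ω := fun n => {ω | ∑ k ∈ Finset.Icc 1 n, Y k ω ≤ q * n} with hAdef
  -- number of pulls is at most t - 1
  have hpulls_le : ∀ t ω, pulls E.arm 0 t ω ≤ t - 1 := by
    intro t ω
    calc pulls E.arm 0 t ω ≤ ∑ τ ∈ Finset.Ico 1 t, 1 := by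
          refine Finset.sum_le_sum fun τ _ => ?_
          split <;> omega
      _ = t - 1 := by rw [Finset.sum_const, Nat.card_Ico, smul_eq_mul, mul_one]
  -- event inclusion
  have hincl : ∀ t : ℕ, 1 ≤ t →
      {ω | thetaTS ε E.arm E.X E.U 0 t ω ≤ 1 - ε ∧
          ((t : ℝ) - 1) ^ b < (pulls E.arm 0 t ω : ℝ)} ⊆
        ⋃ n ∈ Finset.Ioc ⌊((t : ℝ) - 1) ^ b⌋₊ (t - 1), A n := by
    intro t ht1 ω hω
    obtain ⟨hθ, hpull⟩ := hω
    set n : ℕ := pulls E.arm 0 t ω with hn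
    have hu0 : (0 : ℝ) ≤ ((t : ℝ) - 1) ^ b := by
      apply Real.rpow_nonneg
      have : (1 : ℝ) ≤ t := by exact_mod_cast ht1
      linarith
    have hfl : ⌊((t : ℝ) - 1) ^ b⌋₊ < n := (Nat.floor_lt hu0).mpr hpull
    have hemp : empMean E.arm E.X 0 t ω ≤ 1 - ε := by
      by_cases h : 1 - ε < empMean E.arm E.X 0 t ω
      · rw [thetaTS, if_pos h] at hθ
        linarith
      · linarith [not_lt.mp h]
    have hn0 : n ≠ 0 := by omega
    have hnpos : (0 : ℝ) < n := by exact_mod_cast Nat.pos_of_ne_zero hn0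
    have hsum : ∑ k ∈ Finset.Icc 1 n, Y k ω ≤ q * n := by
      rw [empMean, if_neg hn0] at hemp
      have : rewSum E.arm E.X 0 t ω ≤ (1 - ε) * n := by
        rw [div_le_iff₀ hnpos] at hemp
        linarith
      rw [rewSum] at this
      exact this
    simp only [Set.mem_iUnion]
    exact ⟨n, Finset.mem_Ioc.mpr ⟨hfl, hpulls_le t ω⟩, hsum⟩
  rcases lt_or_eq_of_le hp1 with hplt | hpeq
  · -- case p < 1 : Chernoff bound applies
    set dd : ℝ := klBern q p with hdd
    have hddpos : 0 < dd := klBern_aux_pos hq0 hq1 (hq0.trans hqp) hplt hqp.ne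
    have hD : klBernE (1 - ε) (μ 0) = ENNReal.ofReal dd := by
      rw [klBernE, if_neg]
      push_neg
      constructor
      · intro _; linarith
      · intro _; linarith [hq0.trans hqp]
    -- per-round bound for large t
    have hround : ∀ t ∈ Finset.Icc 1 T, L1 ≤ t →
        E.P {ω | thetaTS ε E.arm E.X E.U 0 t ω ≤ 1 - ε ∧
          ((t : ℝ) - 1) ^ b < (pulls E.arm 0 t ω : ℝ)} ≤
          ENNReal.ofReal (1 / (t : ℝ) ^ 2 / dd) := by
      intro t htmem htL
      rw [Finset.mem_Icc] at htmem
      have ht1 : 1 ≤ t := htmem.1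
      have hu0 : (0 : ℝ) ≤ ((t : ℝ) - 1) ^ b := by
        apply Real.rpow_nonneg
        have : (1 : ℝ) ≤ t := by exact_mod_cast ht1
        linarith
      calc E.P {ω | thetaTS ε E.arm E.X E.U 0 t ω ≤ 1 - ε ∧
            ((t : ℝ) - 1) ^ b < (pulls E.arm 0 t ω : ℝ)}
          ≤ E.P (⋃ n ∈ Finset.Ioc ⌊((t : ℝ) - 1) ^ b⌋₊ (t - 1), A n) :=
            measure_mono (hincl t ht1)
        _ ≤ ∑ n ∈ Finset.Ioc ⌊((t : ℝ) - 1) ^ b⌋₊ (t - 1), E.P (A n) :=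
            measure_biUnion_finset_le _ _
        _ ≤ ∑ n ∈ Finset.Ioc ⌊((t : ℝ) - 1) ^ b⌋₊ (t - 1),
              ENNReal.ofReal (Real.exp (-((n : ℝ) * dd))) := by
            refine Finset.sum_le_sum fun n _ => ?_
            exact chernoff_bernoulli E.P Y hYmeas hYlaw hYindep hq0 hq1 hqp hplt n
        _ = ENNReal.ofReal (∑ n ∈ Finset.Ioc ⌊((t : ℝ) - 1) ^ b⌋₊ (t - 1),
              Real.exp (-((n : ℝ) * dd))) :=
            (ENNReal.ofReal_sum_of_nonneg fun n _ => (Real.exp_pos _).le).symm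
        _ ≤ ENNReal.ofReal (1 / (t : ℝ) ^ 2 / dd) := by
            apply ENNReal.ofReal_le_ofReal
            exact sum_exp_tail dd hddpos t ht1 _ hu0 (hL1 t htL)
    -- split the sum
    rw [← Finset.sum_filter_add_sum_filter_not (Finset.Icc 1 T) (fun t => t < L1)]
    have hpart1 : ∑ t ∈ (Finset.Icc 1 T).filter (fun t => t < L1),
        E.P {ω | thetaTS ε E.arm E.X E.U 0 t ω ≤ 1 - ε ∧
          ((t : ℝ) - 1) ^ b < (pulls E.arm 0 t ω : ℝ)} ≤ (L1 : ℝ≥0∞) := by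
      calc ∑ t ∈ (Finset.Icc 1 T).filter (fun t => t < L1),
            E.P {ω | thetaTS ε E.arm E.X E.U 0 t ω ≤ 1 - ε ∧
              ((t : ℝ) - 1) ^ b < (pulls E.arm 0 t ω : ℝ)}
          ≤ ∑ _t ∈ (Finset.Icc 1 T).filter (fun t => t < L1), 1 :=
            Finset.sum_le_sum fun t _ => prob_le_one
        _ = (((Finset.Icc 1 T).filter (fun t => t < L1)).card : ℝ≥0∞) := by
            rw [Finset.sum_const, nsmul_eq_mul, mul_one]
        _ ≤ (L1 : ℝ≥0∞) := by
            rw [Nat.cast_le]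
            calc ((Finset.Icc 1 T).filter (fun t => t < L1)).card
                ≤ (Finset.Ico 1 L1).card := by
                  apply Finset.card_le_card
                  intro t htmem
                  rw [Finset.mem_filter, Finset.mem_Icc] at htmem
                  rw [Finset.mem_Ico]
                  exact ⟨htmem.1.1, htmem.2⟩
              _ ≤ L1 := by rw [Nat.card_Ico]; omega
    have hpart2 : ∑ t ∈ (Finset.Icc 1 T).filter (fun t => ¬ t < L1),
        E.P {ω | thetaTS ε E.arm E.X E.U 0 t ω ≤ 1 - ε ∧
          ((t : ℝ) - 1) ^ b < (pulls E.arm 0 t ω : ℝ)} ≤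
          ENNReal.ofReal (Real.pi ^ 2 / 6) / klBernE (1 - ε) (μ 0) := by
      rw [hD, ← ENNReal.ofReal_div_of_pos hddpos]
      calc ∑ t ∈ (Finset.Icc 1 T).filter (fun t => ¬ t < L1),
            E.P {ω | thetaTS ε E.arm E.X E.U 0 t ω ≤ 1 - ε ∧
              ((t : ℝ) - 1) ^ b < (pulls E.arm 0 t ω : ℝ)}
          ≤ ∑ t ∈ (Finset.Icc 1 T).filter (fun t => ¬ t < L1),
              ENNReal.ofReal (1 / (t : ℝ) ^ 2 / dd) := by
            refine Finset.sum_le_sum fun t htmem => ?_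
            rw [Finset.mem_filter] at htmem
            exact hround t htmem.1 (not_lt.mp htmem.2)
        _ = ENNReal.ofReal (∑ t ∈ (Finset.Icc 1 T).filter (fun t => ¬ t < L1),
              1 / (t : ℝ) ^ 2 / dd) := by
            refine (ENNReal.ofReal_sum_of_nonneg fun t _ => ?_).symm
            positivity
        _ ≤ ENNReal.ofReal (Real.pi ^ 2 / 6 / dd) := by
            apply ENNReal.ofReal_le_ofReal
            rw [← Finset.sum_div]
            have hbasel : ∑ t ∈ (Finset.Icc 1 T).filter (fun t => ¬ t < L1),
                1 / (t : ℝ) ^ 2 ≤ Real.pi ^ 2 / 6 :=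
              sum_le_hasSum _ (fun i _ => by positivity) hasSum_zeta_two
            gcongr
    exact add_le_add hpart1 hpart2
  · -- case p = 1 : all rewards are a.s. 1, all events are null
    have hnull : ∀ n : ℕ, 1 ≤ n → E.P (A n) = 0 := by
      intro n hn1
      have hsub : A n ⊆ ⋃ k ∈ Finset.Icc 1 n, {ω | ¬ Y k ω = 1} := by
        intro ω hω
        by_contra hcon
        simp only [Set.mem_iUnion, Set.mem_setOf_eq, not_exists, not_not] at hcon
        have hall : ∀ k ∈ Finset.Icc 1 n, Y k ω = 1 := fun k hk => hcon k hk
        have hsum : ∑ k ∈ Finset.Icc 1 n, Y k ω = n := by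
          rw [Finset.sum_congr rfl hall, Finset.sum_const, Nat.card_Icc]
          simp
        rw [hAdef] at hω
        simp only [Set.mem_setOf_eq, hsum] at hω
        have hnpos : (0 : ℝ) < n := by exact_mod_cast hn1
        nlinarith
      refine le_antisymm ?_ zero_le
      refine (measure_mono hsub).trans ?_
      refine (measure_biUnion_finset_le _ _).trans ?_
      have : ∀ k ∈ Finset.Icc 1 n, E.P {ω | ¬ Y k ω = 1} = 0 := by
        intro k _
        have := bernoulli_ae_eq_one (hYmeas k) (by rw [← hpeq] at *; exact hYlaw k)
        rwa [ae_iff] at this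
      rw [Finset.sum_congr rfl this, Finset.sum_const, smul_zero]
    have hzero : ∀ t ∈ Finset.Icc 1 T,
        E.P {ω | thetaTS ε E.arm E.X E.U 0 t ω ≤ 1 - ε ∧
          ((t : ℝ) - 1) ^ b < (pulls E.arm 0 t ω : ℝ)} = 0 := by
      intro t htmem
      have ht1 : 1 ≤ t := (Finset.mem_Icc.mp htmem).1
      refine le_antisymm ?_ zero_le
      refine (measure_mono (hincl t ht1)).trans ?_
      refine (measure_biUnion_finset_le _ _).trans ?_
      have : ∀ n ∈ Finset.Ioc ⌊((t : ℝ) - 1) ^ b⌋₊ (t - 1), E.P (A n) = 0 := by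
        intro n hn
        rw [Finset.mem_Ioc] at hn
        exact hnull n (by omega)
      rw [Finset.sum_congr rfl this, Finset.sum_const, smul_zero]
    rw [Finset.sum_congr rfl hzero, Finset.sum_const, smul_zero]
    exact zero_le

end
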